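/- Let (X, μ) be a finite measure space, 1 < r < 2, λ > 0, and let g : X → M₃(ℝ) be measurable with ∫_X |g|² dμ < ∞. Then ∫_X ( 1 − (1 + λ|g(x)|²)^{r/2−1} ) |g(x)| dμ(x) ≤ λ^{1−r/2} μ(X)^{(r−1)/2} ( ∫_X |g|² dμ )^{(3−r)/2}. (Integrated estimate in the proof of Proposition 3.1 of the paper showing the nonlinear viscosity correction vanishes for 1 < r < 2.) -/

import Mathlib

open MeasureTheory ENNReal

noncomputable section

/-- 3×3 real matrices, with the (homogeneous) sup norm. -/
abbrev M3 := Fin 3 → Fin 3 → ℝ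

/-- Pointwise bound: for `s ≥ 0`, `(1 - (1+λs²)^{r/2-1}) s ≤ λ^{1-r/2} s^{3-r}`. -/
lemma pointwise_bound {r lam s : ℝ} (hr1 : 1 < r) (hr2 : r < 2) (hlam : 0 < lam)
    (hs : 0 ≤ s) :
    (1 - (1 + lam * s ^ 2) ^ (r / 2 - 1)) * s ≤ lam ^ (1 - r / 2) * s ^ (3 - r) := by
  set b : ℝ := 1 - r / 2 with hb
  have hb0 : 0 < b := by simp [hb]; linarith
  have hb1 : b ≤ 1 := by simp [hb]; linarith
  set t : ℝ := lam * s ^ 2 with ht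
  have ht0 : 0 ≤ t := by positivity
  -- subadditivity: (1+t)^b ≤ 1 + t^b
  have hsub : (1 + t) ^ b ≤ 1 + t ^ b := by
    have := NNReal.rpow_add_le_add_rpow 1 t.toNNReal hb0.le hb1
    have h2 := NNReal.coe_le_coe.2 this
    push_cast at h2
    rw [Real.coe_toNNReal t ht0] at h2
    simpa [NNReal.rpow_natCast] using h2
  -- hence 1 - (1+t)^(r/2-1) ≤ t^b
  have key : 1 - (1 + t) ^ (r / 2 - 1) ≤ t ^ b := by
    have h1t : (0:ℝ) < 1 + t := by linarith
    have hrw : (1 + t) ^ (r / 2 - 1) = ((1 + t) ^ b)⁻¹ := by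
      rw [← Real.rpow_neg h1t.le]; congr 1; rw [hb]; ring
    rw [hrw]
    have hpos : (0:ℝ) < (1 + t) ^ b := Real.rpow_pos_of_pos h1t b
    have hle : (1 + t) ^ b ≤ 1 + t ^ b := hsub
    have htb : 0 ≤ t ^ b := Real.rpow_nonneg ht0 b
    have h1 : (1 + t ^ b)⁻¹ ≤ ((1 + t) ^ b)⁻¹ := by
      apply inv_anti₀ hpos hle
    have h2 : 1 - (1 + t ^ b)⁻¹ ≤ t ^ b := by
      have h3 : (0:ℝ) < 1 + t ^ b := by linarith
      nlinarith [mul_inv_cancel₀ h3.ne', sq_nonneg (t ^ b), inv_nonneg.2 h3.le]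
    linarith
  have hts : t ^ b = lam ^ b * s ^ (2 * b) := by
    rw [ht, Real.mul_rpow hlam.le (by positivity), ← Real.rpow_natCast s 2,
      ← Real.rpow_mul hs]
    ring_nf
  calc (1 - (1 + t) ^ (r / 2 - 1)) * s ≤ t ^ b * s := by
        apply mul_le_mul_of_nonneg_right key hs
    _ = lam ^ b * (s ^ (2 * b) * s) := by rw [hts]; ring
    _ = lam ^ b * s ^ (3 - r) := by
        rcases eq_or_lt_of_le hs with h | h
        · rw [← h]
          rw [Real.zero_rpow (by simp [hb]; linarith), Real.zero_rpow (by linarith)]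
          ring
        · rw [← Real.rpow_add_one h.ne' (2 * b)]
          congr 2
          simp [hb]; ring

/-- **Integrated estimate for `1 < r < 2`** (proof of Proposition 3.1). On a finite
measure space, for measurable matrix-valued `g` with `∫ |g|² dμ < ∞`,
`∫ (1 − (1 + λ|g|²)^{r/2−1}) |g| dμ ≤ λ^{1−r/2} μ(X)^{(r−1)/2} (∫ |g|² dμ)^{(3−r)/2}`. -/
theorem integrated_estimate_one_lt_r_lt_two
    {X : Type*} [MeasurableSpace X] (μ : Measure X) [IsFiniteMeasure μ]
    (r lam : ℝ) (hr1 : 1 < r) (hr2 : r < 2) (hlam : 0 < lam)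
    (g : X → M3) (hg : Measurable g)
    (hint : ∫⁻ x, (‖g x‖₊ : ℝ≥0∞) ^ (2 : ℝ) ∂μ < ⊤) :
    ∫⁻ x, ENNReal.ofReal ((1 - (1 + lam * ‖g x‖ ^ 2) ^ (r / 2 - 1)) * ‖g x‖) ∂μ ≤
      ENNReal.ofReal (lam ^ (1 - r / 2)) * (μ Set.univ) ^ ((r - 1) / 2) *
        (∫⁻ x, (‖g x‖₊ : ℝ≥0∞) ^ (2 : ℝ) ∂μ) ^ ((3 - r) / 2) := by
  have h3r : (0:ℝ) < 3 - r := by linarith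
  -- Step 1: pointwise bound and pulling out the constant
  have step1 : ∫⁻ x, ENNReal.ofReal ((1 - (1 + lam * ‖g x‖ ^ 2) ^ (r / 2 - 1)) * ‖g x‖) ∂μ ≤
      ENNReal.ofReal (lam ^ (1 - r / 2)) * ∫⁻ x, (‖g x‖₊ : ℝ≥0∞) ^ (3 - r) ∂μ := by
    rw [← lintegral_const_mul' _ _ ofReal_ne_top]
    apply lintegral_mono
    intro x
    calc ENNReal.ofReal ((1 - (1 + lam * ‖g x‖ ^ 2) ^ (r / 2 - 1)) * ‖g x‖)
        ≤ ENNReal.ofReal (lam ^ (1 - r / 2) * ‖g x‖ ^ (3 - r)) :=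
          ofReal_le_ofReal (pointwise_bound hr1 hr2 hlam (norm_nonneg _))
      _ = ENNReal.ofReal (lam ^ (1 - r / 2)) * ENNReal.ofReal (‖g x‖ ^ (3 - r)) :=
          ofReal_mul (by positivity)
      _ = ENNReal.ofReal (lam ^ (1 - r / 2)) * (‖g x‖₊ : ℝ≥0∞) ^ (3 - r) := by
          rw [← ENNReal.ofReal_rpow_of_nonneg (norm_nonneg _) h3r.le,
            ofReal_norm, enorm_eq_nnnorm]
  -- Step 2: Hölder
  have hpq : Real.HolderConjugate (2 / (3 - r)) (2 / (r - 1)) := by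
    rw [Real.holderConjugate_iff]
    constructor
    · rw [lt_div_iff₀ h3r]; linarith
    · rw [inv_div, inv_div]; ring
  have hfmeas : AEMeasurable (fun x => (‖g x‖₊ : ℝ≥0∞) ^ (3 - r)) μ :=
    (hg.enorm.pow_const _).aemeasurable
  have holder := ENNReal.lintegral_mul_le_Lp_mul_Lq μ hpq hfmeas
    (aemeasurable_const : AEMeasurable (fun _ : X => (1:ℝ≥0∞)) μ)
  simp only [Pi.mul_apply, mul_one, ENNReal.one_rpow, lintegral_one] at holder
  have hrw1 : ∀ x, ((‖g x‖₊ : ℝ≥0∞) ^ (3 - r)) ^ (2 / (3 - r)) = (‖g x‖₊ : ℝ≥0∞) ^ (2:ℝ) := by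
    intro x
    rw [← ENNReal.rpow_mul]
    congr 1
    field_simp
  have hrw2 : (1:ℝ) / (2 / (3 - r)) = (3 - r) / 2 := by
    rw [one_div_div]
  have hrw3 : (1:ℝ) / (2 / (r - 1)) = (r - 1) / 2 := by
    rw [one_div_div]
  simp only [hrw1, hrw2, hrw3] at holder
  calc ∫⁻ x, ENNReal.ofReal ((1 - (1 + lam * ‖g x‖ ^ 2) ^ (r / 2 - 1)) * ‖g x‖) ∂μ
      ≤ ENNReal.ofReal (lam ^ (1 - r / 2)) * ∫⁻ x, (‖g x‖₊ : ℝ≥0∞) ^ (3 - r) ∂μ := step1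
    _ ≤ ENNReal.ofReal (lam ^ (1 - r / 2)) *
        ((∫⁻ x, (‖g x‖₊ : ℝ≥0∞) ^ (2:ℝ) ∂μ) ^ ((3 - r) / 2) * μ Set.univ ^ ((r - 1) / 2)) :=
        mul_le_mul_right holder _
    _ = ENNReal.ofReal (lam ^ (1 - r / 2)) * μ Set.univ ^ ((r - 1) / 2) *
        (∫⁻ x, (‖g x‖₊ : ℝ≥0∞) ^ (2:ℝ) ∂μ) ^ ((3 - r) / 2) := by ring
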